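/- For any digraph D, γ⁺ₘ(D) ≤ ⌈γ⁺(D)/2⌉. -/

import Mathlib

/-- Closed out-neighborhood `N⁺[S]` of a set `S` in the digraph with arc relation `A`. -/
noncomputable def closedOut {V : Type*} [Fintype V] [DecidableEq V]
    (A : V → V → Prop) (S : Finset V) : Finset V :=
  S ∪ @Finset.filter _ (fun v => ∃ u ∈ S, A u v) (Classical.decPred _) Finset.univ

/-- `S` is a majority out-dominating set: `|N⁺[S]| ≥ n/2`. -/
def IsMODS {V : Type*} [Fintype V] [DecidableEq V]
    (A : V → V → Prop) (S : Finset V) : Prop :=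
  2 * (closedOut A S).card ≥ Fintype.card V

/-- Set majority out-domination number `γ⁺ₘ`. -/
noncomputable def gammaM {V : Type*} [Fintype V] [DecidableEq V]
    (A : V → V → Prop) : ℕ :=
  sInf {k | ∃ S : Finset V, IsMODS A S ∧ S.card = k}

/-- Out-domination number `γ⁺`. -/
noncomputable def gammaPlus {V : Type*} [Fintype V] [DecidableEq V]
    (A : V → V → Prop) : ℕ :=
  sInf {k | ∃ S : Finset V, closedOut A S = Finset.univ ∧ S.card = k}

/-- Out-degree of a vertex. -/
noncomputable def outDeg {V : Type*} [Fintype V] [DecidableEq V]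
    (A : V → V → Prop) (v : V) : ℕ :=
  (@Finset.filter _ (fun w => A v w) (Classical.decPred _) Finset.univ).card

/-- Maximum out-degree `Δ⁺`. -/
noncomputable def DeltaPlus {V : Type*} [Fintype V] [DecidableEq V]
    (A : V → V → Prop) : ℕ :=
  Finset.univ.sup (outDeg A)



lemma closedOut_union {V : Type*} [Fintype V] [DecidableEq V]
    (A : V → V → Prop) (s t : Finset V) :
    closedOut A (s ∪ t) = closedOut A s ∪ closedOut A t := by
  ext v
  simp only [closedOut, Finset.mem_union, Finset.mem_filter, Finset.mem_univ, true_and]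
  constructor
  · rintro (h | ⟨u, hu | hu, hA⟩)
    · tauto
    · exact Or.inl (Or.inr ⟨u, hu, hA⟩)
    · exact Or.inr (Or.inr ⟨u, hu, hA⟩)
  · rintro ((h | ⟨u, hu, hA⟩) | (h | ⟨u, hu, hA⟩))
    · tauto
    · exact Or.inr ⟨u, Or.inl hu, hA⟩
    · tauto
    · exact Or.inr ⟨u, Or.inr hu, hA⟩

/-- `γ⁺ₘ(D) ≤ ⌈γ⁺(D)/2⌉`. -/
theorem stmt9 {V : Type*} [Fintype V] [DecidableEq V]
    (A : V → V → Prop) (hloop : ∀ v, ¬ A v v) :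
    gammaM A ≤ (gammaPlus A + 1) / 2 := by
  classical
  have hne : {k | ∃ S : Finset V, closedOut A S = Finset.univ ∧ S.card = k}.Nonempty := by
    refine ⟨(Finset.univ : Finset V).card, Finset.univ, ?_, rfl⟩
    apply Finset.eq_univ_of_forall
    intro v
    simp [closedOut]
  obtain ⟨S, hS, hcard⟩ := Nat.sInf_mem hne
  have hcard : S.card = gammaPlus A := hcard
  set k := gammaPlus A with hk
  obtain ⟨S₁, hS₁sub, hS₁card⟩ := Finset.exists_subset_card_eq (s := S) (n := (k + 1) / 2)
    (by rw [hcard]; omega)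
  set S₂ := S \ S₁ with hS₂
  have hunion : S₁ ∪ S₂ = S := Finset.union_sdiff_of_subset hS₁sub
  have hS₂card : S₂.card = k - (k + 1) / 2 := by
    rw [hS₂, Finset.card_sdiff_of_subset hS₁sub, hcard, hS₁card]
  have hsum : (closedOut A S₁).card + (closedOut A S₂).card ≥ Fintype.card V := by
    have h := Finset.card_union_le (closedOut A S₁) (closedOut A S₂)
    rw [← closedOut_union, hunion, hS] at h
    simpa [Finset.card_univ] using h
  have key : IsMODS A S₁ ∨ IsMODS A S₂ := by
    unfold IsMODS
    omega
  rcases key with h | h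
  · calc gammaM A ≤ S₁.card := Nat.sInf_le ⟨S₁, h, rfl⟩
      _ = (k + 1) / 2 := hS₁card
  · calc gammaM A ≤ S₂.card := Nat.sInf_le ⟨S₂, h, rfl⟩
      _ ≤ (k + 1) / 2 := by rw [hS₂card]; omega
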